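/- arXiv:2410.13643 — 8 statements merged into one kernel-verified Lean document; each statement's English description precedes it below -/
import Mathlib

section
/- Let X be a finite nonempty type, Q : ℝ → X → X → ℝ a time-dependent rate family, I ⊆ ℝ, and α > 0. Suppose V : ℝ → X → ℝ is such that for every t ∈ I and x ∈ X, the function s ↦ V s x is differentiable at t with derivative α · ∑_{y ≠ x} Q t x y · (1 − exp((V t y − V t x)/α)). Then the function h defined by h t x = exp(V t x / α) satisfies the Kolmogorov backward equation for Q on I, i.e., for every t ∈ I and x ∈ X the function s ↦ h s x is differentiable at t with derivative ∑_{y ≠ x} Q t x y · (h t x − h t y). (Key step in the proof of the Feynman–Kac formula in CTMC, Theorem 3.) -/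
open Real Finset

/-- Key step in the proof of the Feynman–Kac formula in CTMC: if `V` solves the
value-function ODE, then `h t x = exp (V t x / α)` satisfies the Kolmogorov
backward equation for `Q` on `I`. -/
theorem drakes_feynman_kac_exp_transform
    {X : Type*} [Fintype X] [Nonempty X] [DecidableEq X]
    (Q : ℝ → X → X → ℝ) (I : Set ℝ) (α : ℝ) (hα : 0 < α)
    (V : ℝ → X → ℝ)
    (hV : ∀ t ∈ I, ∀ x : X, HasDerivAt (fun s => V s x)
      (α * ∑ y ∈ Finset.univ.filter (fun y => y ≠ x),
        Q t x y * (1 - Real.exp ((V t y - V t x) / α))) t) :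
    ∀ t ∈ I, ∀ x : X, HasDerivAt (fun s => Real.exp (V s x / α))
      (∑ y ∈ Finset.univ.filter (fun y => y ≠ x),
        Q t x y * (Real.exp (V t x / α) - Real.exp (V t y / α))) t := by
  intro t ht x
  have h1 := ((hV t ht x).div_const α).exp
  have hne : α ≠ 0 := hα.ne'
  convert h1 using 1
  rw [mul_div_cancel_left₀ _ hne, Finset.mul_sum]
  apply Finset.sum_congr rfl
  intro y _
  rw [mul_comm (Real.exp _), mul_assoc]
  congr 1
  rw [sub_mul, one_mul, ← Real.exp_add, ← add_div, sub_add_cancel]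
end

section
/- Let Y be a finite type, a : Y → ℝ with a y > 0 for all y, and b : Y → ℝ. Then for every q : Y → ℝ with q y > 0 for all y, ∑_{y} (q y − a y − q y · log(q y / a y) + q y · b y) ≤ ∑_{y} a y · (exp(b y) − 1), with equality if and only if q y = a y · exp(b y) for every y. Consequently the supremum of this functional over all positive q : Y → ℝ equals ∑_{y} a y · (exp(b y) − 1) and is attained uniquely at q y = a y · exp(b y). (The maximization in the Hamilton–Jacobi–Bellman equation for CTMC, yielding the optimal generator of Theorem 2.) -/
open Real Finset

private lemma drake_term_le (a q b : ℝ) (ha : 0 < a) (hq : 0 < q) :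
    q - a - q * Real.log (q / a) + q * b ≤ a * (Real.exp b - 1) := by
  have h1 : (Real.log a + b - Real.log q) + 1 ≤ Real.exp (Real.log a + b - Real.log q) :=
    Real.add_one_le_exp _
  have h2 : q * Real.exp (Real.log a + b - Real.log q) = a * Real.exp b := by
    rw [Real.exp_sub, Real.exp_add, Real.exp_log ha, Real.exp_log hq]
    field_simp
  have h3 : q * ((Real.log a + b - Real.log q) + 1) ≤ a * Real.exp b := by
    calc q * ((Real.log a + b - Real.log q) + 1)
        ≤ q * Real.exp (Real.log a + b - Real.log q) :=
          mul_le_mul_of_nonneg_left h1 hq.le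
      _ = a * Real.exp b := h2
  rw [Real.log_div hq.ne' ha.ne']
  nlinarith [h3]

private lemma drake_term_eq_iff (a q b : ℝ) (ha : 0 < a) (hq : 0 < q) :
    q - a - q * Real.log (q / a) + q * b = a * (Real.exp b - 1) ↔ q = a * Real.exp b := by
  constructor
  · intro h
    by_contra hne
    have hx : Real.log a + b - Real.log q ≠ 0 := by
      intro h0
      apply hne
      have : Real.exp (Real.log a + b - Real.log q) = 1 := by rw [h0, Real.exp_zero]
      rw [Real.exp_sub, Real.exp_add, Real.exp_log ha, Real.exp_log hq] at this
      field_simp at this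
      linarith
    have h1 : (Real.log a + b - Real.log q) + 1 < Real.exp (Real.log a + b - Real.log q) :=
      Real.add_one_lt_exp hx
    have h2 : q * Real.exp (Real.log a + b - Real.log q) = a * Real.exp b := by
      rw [Real.exp_sub, Real.exp_add, Real.exp_log ha, Real.exp_log hq]
      field_simp
    have h3 : q * ((Real.log a + b - Real.log q) + 1) < a * Real.exp b := by
      calc q * ((Real.log a + b - Real.log q) + 1)
          < q * Real.exp (Real.log a + b - Real.log q) := by
            exact (mul_lt_mul_iff_right₀ hq).mpr h1
        _ = a * Real.exp b := h2
    rw [Real.log_div hq.ne' ha.ne'] at h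
    nlinarith [h3]
  · intro h
    subst h
    have hd : a * Real.exp b / a = Real.exp b := by field_simp
    rw [hd, Real.log_exp]
    ring

/-- The maximization in the Hamilton–Jacobi–Bellman equation for CTMC, yielding the
optimal generator of Theorem 2: over positive `q : Y → ℝ`, the KL-regularized
objective `∑ y, (q y − a y − q y·log(q y / a y) + q y·b y)` is bounded by
`∑ y, a y·(exp (b y) − 1)`, with equality iff `q y = a y·exp (b y)` for all `y`;
consequently the supremum is attained uniquely at this `q` and equals the bound. -/
theorem drakes_hjb_maximization {Y : Type*} [Fintype Y]
    (a b : Y → ℝ) (ha : ∀ y, 0 < a y) :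
    (∀ q : Y → ℝ, (∀ y, 0 < q y) →
      ∑ y, (q y - a y - q y * Real.log (q y / a y) + q y * b y) ≤
        ∑ y, a y * (Real.exp (b y) - 1)) ∧
    (∀ q : Y → ℝ, (∀ y, 0 < q y) →
      (∑ y, (q y - a y - q y * Real.log (q y / a y) + q y * b y) =
          ∑ y, a y * (Real.exp (b y) - 1) ↔
        ∀ y, q y = a y * Real.exp (b y))) ∧
    IsGreatest {s : ℝ | ∃ q : Y → ℝ, (∀ y, 0 < q y) ∧
        s = ∑ y, (q y - a y - q y * Real.log (q y / a y) + q y * b y)}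
      (∑ y, a y * (Real.exp (b y) - 1)) := by
  have hle : ∀ q : Y → ℝ, (∀ y, 0 < q y) →
      ∑ y, (q y - a y - q y * Real.log (q y / a y) + q y * b y) ≤
        ∑ y, a y * (Real.exp (b y) - 1) := fun q hq =>
    Finset.sum_le_sum fun y _ => drake_term_le (a y) (q y) (b y) (ha y) (hq y)
  have heq : ∀ q : Y → ℝ, (∀ y, 0 < q y) →
      (∑ y, (q y - a y - q y * Real.log (q y / a y) + q y * b y) =
          ∑ y, a y * (Real.exp (b y) - 1) ↔
        ∀ y, q y = a y * Real.exp (b y)) := by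
    intro q hq
    rw [Finset.sum_eq_sum_iff_of_le
      (fun y _ => drake_term_le (a y) (q y) (b y) (ha y) (hq y))]
    constructor
    · intro h y
      exact (drake_term_eq_iff (a y) (q y) (b y) (ha y) (hq y)).mp (h y (Finset.mem_univ y))
    · intro h y _
      exact (drake_term_eq_iff (a y) (q y) (b y) (ha y) (hq y)).mpr (h y)
  refine ⟨hle, heq, ⟨?_, ?_⟩⟩
  · refine ⟨fun y => a y * Real.exp (b y), fun y => mul_pos (ha y) (Real.exp_pos _), ?_⟩
    exact ((heq _ (fun y => mul_pos (ha y) (Real.exp_pos _))).mpr (fun y => rfl)).symm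
  · rintro s ⟨q, hq, rfl⟩
    exact hle q hq
end

section
/- Let X be a finite nonempty type, Q : ℝ → X → X → ℝ a time-dependent rate family, and I ⊆ ℝ. Suppose h : ℝ → X → ℝ satisfies h t x > 0 for all t ∈ I and x ∈ X and satisfies the Kolmogorov backward equation for Q on I, and suppose p : ℝ → X → ℝ satisfies the Kolmogorov forward equation for Q on I. Let C ≠ 0 be a real constant, define Q* : ℝ → X → X → ℝ by Q* t x y = Q t x y · h t y / h t x for x ≠ y, and define H : ℝ → X → ℝ by H t x = h t x · p t x / C. Then H satisfies the Kolmogorov forward equation for Q* on I, i.e., for every t ∈ I and x ∈ X the function s ↦ H s x is differentiable at t with derivative (∑_{y ≠ x} Q* t y x · H t y) − (∑_{y ≠ x} Q* t x y · H t x). (Core computation in the proof of Theorem 4: the marginal distribution induced by the optimal generator is the Doob-type transform exp(V_t(·)/α)·p^{pre}_t(·)/C.) -/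
open Real Finset

/-- Core computation in the proof of Theorem 4 (Doob-type transform): if `h` is positive
and satisfies the Kolmogorov backward equation for `Q` on `I`, and `p` satisfies the
Kolmogorov forward equation for `Q` on `I`, then `H t x = h t x · p t x / C` satisfies
the Kolmogorov forward equation for the transformed rate family
`Q* t x y = Q t x y · h t y / h t x` (for `x ≠ y`) on `I`. -/
theorem drakes_doob_transform_forward_equation
    {X : Type*} [Fintype X] [Nonempty X] [DecidableEq X]
    (Q : ℝ → X → X → ℝ) (I : Set ℝ)
    (h p : ℝ → X → ℝ) (C : ℝ) (hC : C ≠ 0)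
    (hpos : ∀ t ∈ I, ∀ x : X, 0 < h t x)
    (hback : ∀ t ∈ I, ∀ x : X, HasDerivAt (fun s => h s x)
      (∑ y ∈ Finset.univ.filter (fun y => y ≠ x), Q t x y * (h t x - h t y)) t)
    (hfwd : ∀ t ∈ I, ∀ x : X, HasDerivAt (fun s => p s x)
      ((∑ y ∈ Finset.univ.filter (fun y => y ≠ x), Q t y x * p t y) -
        ∑ y ∈ Finset.univ.filter (fun y => y ≠ x), Q t x y * p t x) t)
    (Qstar : ℝ → X → X → ℝ)
    (hQstar : ∀ t : ℝ, ∀ x y : X, x ≠ y → Qstar t x y = Q t x y * h t y / h t x)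
    (H : ℝ → X → ℝ)
    (hH : ∀ t : ℝ, ∀ x : X, H t x = h t x * p t x / C) :
    ∀ t ∈ I, ∀ x : X, HasDerivAt (fun s => H s x)
      ((∑ y ∈ Finset.univ.filter (fun y => y ≠ x), Qstar t y x * H t y) -
        ∑ y ∈ Finset.univ.filter (fun y => y ≠ x), Qstar t x y * H t x) t := by
  intro t ht x
  have hx := hpos t ht x
  have key : HasDerivAt (fun s => H s x)
      (((∑ y ∈ Finset.univ.filter (fun y => y ≠ x), Q t x y * (h t x - h t y)) * p t x +
        h t x * ((∑ y ∈ Finset.univ.filter (fun y => y ≠ x), Q t y x * p t y) -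
          ∑ y ∈ Finset.univ.filter (fun y => y ≠ x), Q t x y * p t x)) / C) t := by
    have h1 : HasDerivAt (fun s => h s x * p s x / C) _ t :=
      ((hback t ht x).mul (hfwd t ht x)).div_const C
    exact h1.congr_of_eventuallyEq (Filter.Eventually.of_forall fun s => hH s x)
  convert key using 1
  have e1 : ∀ y ∈ Finset.univ.filter (fun y => y ≠ x),
      Qstar t y x * H t y = Q t y x * p t y * (h t x / C) := by
    intro y hy
    have hyx : y ≠ x := (Finset.mem_filter.mp hy).2
    have hyp := (hpos t ht y).ne'
    rw [hQstar t y x hyx, hH t y]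
    field_simp
  have e2 : ∀ y ∈ Finset.univ.filter (fun y => y ≠ x),
      Qstar t x y * H t x = Q t x y * h t y * (p t x / C) := by
    intro y hy
    have hyx : y ≠ x := (Finset.mem_filter.mp hy).2
    rw [hQstar t x y hyx.symm, hH t x]
    field_simp
  rw [Finset.sum_congr rfl e1, Finset.sum_congr rfl e2]
  simp only [mul_sub, Finset.sum_sub_distrib, ← Finset.sum_mul]
  field_simp
  ring
end

section
/- Let X be a finite nonempty type, Q : ℝ → X → X → ℝ a time-dependent rate family, and I ⊆ ℝ an interval. If h : ℝ → X → ℝ satisfies the Kolmogorov backward equation for Q on I and p : ℝ → X → ℝ satisfies the Kolmogorov forward equation for Q on I, then for every t ∈ I the function s ↦ ∑_{x ∈ X} h s x · p s x is differentiable at t with derivative 0; consequently the quantity ∑_{x ∈ X} h t x · p t x is constant on I. (Conservation of the normalizing constant C = ∑_x exp(V_t(x)/α)·p^{pre}_t(x) implicit in the proof of Theorem 4.) -/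
open Real Finset

/-- Conservation of the normalizing constant `C = ∑ x, exp(V_t(x)/α) · p^{pre}_t(x)`
implicit in the proof of Theorem 4: if `h` satisfies the Kolmogorov backward equation
and `p` the Kolmogorov forward equation for `Q` on an interval `I`, then
`∑ x, h t x · p t x` has zero derivative at every `t ∈ I`, hence is constant on `I`. -/
theorem drakes_normalizing_constant_conserved
    {X : Type*} [Fintype X] [Nonempty X] [DecidableEq X]
    (Q : ℝ → X → X → ℝ) (I : Set ℝ) (hI : Convex ℝ I)
    (h p : ℝ → X → ℝ)
    (hback : ∀ t ∈ I, ∀ x : X, HasDerivAt (fun s => h s x)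
      (∑ y ∈ Finset.univ.filter (fun y => y ≠ x), Q t x y * (h t x - h t y)) t)
    (hfwd : ∀ t ∈ I, ∀ x : X, HasDerivAt (fun s => p s x)
      ((∑ y ∈ Finset.univ.filter (fun y => y ≠ x), Q t y x * p t y) -
        ∑ y ∈ Finset.univ.filter (fun y => y ≠ x), Q t x y * p t x) t) :
    (∀ t ∈ I, HasDerivAt (fun s => ∑ x : X, h s x * p s x) 0 t) ∧
    (∀ t ∈ I, ∀ t' ∈ I, ∑ x : X, h t x * p t x = ∑ x : X, h t' x * p t' x) := by
  have hderiv : ∀ t ∈ I, HasDerivAt (fun s => ∑ x : X, h s x * p s x) 0 t := by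
    intro t ht
    set a : X → X → ℝ := fun x y => if y ≠ x then h t x * (Q t y x * p t y) else 0 with ha
    set b : X → X → ℝ := fun x y => if y ≠ x then Q t x y * h t y * p t x else 0 with hb
    have hab : (∑ x : X, ∑ y : X, a x y) = ∑ x : X, ∑ y : X, b x y := by
      rw [Finset.sum_comm]
      refine Finset.sum_congr rfl fun x _ => Finset.sum_congr rfl fun y _ => ?_
      simp only [ha, hb]
      split_ifs with h1 h2 h3
      · ring
      · exact absurd (Ne.symm h1) h2
      · exact absurd (Ne.symm h3) h1
      · rfl
    have key : (∑ x : X,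
        ((∑ y ∈ Finset.univ.filter (fun y => y ≠ x), Q t x y * (h t x - h t y)) * p t x +
          h t x * ((∑ y ∈ Finset.univ.filter (fun y => y ≠ x), Q t y x * p t y) -
            ∑ y ∈ Finset.univ.filter (fun y => y ≠ x), Q t x y * p t x))) = 0 := by
      have step : (∑ x : X,
          ((∑ y ∈ Finset.univ.filter (fun y => y ≠ x), Q t x y * (h t x - h t y)) * p t x +
            h t x * ((∑ y ∈ Finset.univ.filter (fun y => y ≠ x), Q t y x * p t y) -
              ∑ y ∈ Finset.univ.filter (fun y => y ≠ x), Q t x y * p t x))) =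
          ∑ x : X, ∑ y : X, (a x y - b x y) := by
        refine Finset.sum_congr rfl fun x _ => ?_
        simp only [Finset.sum_filter, Finset.sum_mul, Finset.mul_sum,
          ← Finset.sum_sub_distrib, ← Finset.sum_add_distrib]
        refine Finset.sum_congr rfl fun y _ => ?_
        simp only [ha, hb]
        split_ifs <;> ring
      rw [step, Finset.sum_congr rfl fun x _ => Finset.sum_sub_distrib _ _,
        Finset.sum_sub_distrib, hab, sub_self]
    have := HasDerivAt.fun_sum (fun x (_ : x ∈ Finset.univ) =>
      ((hback t ht x).mul (hfwd t ht x)))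
    rw [key] at this
    exact this
  refine ⟨hderiv, ?_⟩
  intro t ht t' ht'
  have bound := hI.norm_image_sub_le_of_norm_hasFDerivWithin_le
    (f := fun s => ∑ x : X, h s x * p s x)
    (f' := fun _ => ContinuousLinearMap.smulRight (1 : ℝ →L[ℝ] ℝ) (0 : ℝ)) (C := 0)
    (fun s hs => ((hderiv s hs).hasFDerivAt).hasFDerivWithinAt)
    (fun s _ => by simp) ht' ht
  simpa [← dist_eq_norm, dist_le_zero] using bound
end

section
/- Let X be a finite nonempty type, T > 0, and Q : ℝ → X → X → ℝ a time-dependent rate family whose entries t ↦ Q t x y are continuous on [0, T]. Suppose h : ℝ → X → ℝ is positive on [0, T] and satisfies the Kolmogorov backward equation for Q on [0, T], p : ℝ → X → ℝ satisfies the Kolmogorov forward equation for Q on [0, T], and C ≠ 0 is a real constant. Define Q* t x y = Q t x y · h t y / h t x for x ≠ y and H t x = h t x · p t x / C. If p* : ℝ → X → ℝ satisfies the Kolmogorov forward equation for Q* on [0, T] with initial condition p* 0 x = H 0 x for all x ∈ X, then p* t x = H t x for all t ∈ [0, T] and x ∈ X. In particular, if α > 0, r : X → ℝ, and h T x = exp(r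 x / α) for all x, then p* T x = exp(r x / α) · p T x / C, i.e., the distribution generated at time T by the transformed rate family is proportional to exp(r(·)/α) · p_T(·). (Theorems 1 and 4: the fine-tuned distribution is proportional to exp(r(·)/α)·p^{pre}(·).) -/
open Real Finset Set

/-- Theorems 1 and 4: the fine-tuned distribution is proportional to
`exp(r(·)/α) · p^{pre}(·)`. With continuous rate entries, a positive backward solution
`h`, a forward solution `p`, and the transformed rates `Q* t x y = Q t x y · h t y / h t x`,
any solution `p*` of the forward equation for `Q*` with initial condition
`p* 0 = h 0 · p 0 / C` coincides with `H t x = h t x · p t x / C` on `[0, T]`;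
in particular if `h T x = exp (r x / α)` then `p* T x = exp (r x / α) * p T x / C`. -/
theorem drakes_finetuned_distribution
    {X : Type*} [Fintype X] [Nonempty X] [DecidableEq X]
    (T : ℝ) (hT : 0 < T) (Q : ℝ → X → X → ℝ)
    (hQcont : ∀ x y : X, ContinuousOn (fun t => Q t x y) (Set.Icc 0 T))
    (h p : ℝ → X → ℝ)
    (hpos : ∀ t ∈ Set.Icc (0 : ℝ) T, ∀ x : X, 0 < h t x)
    (hback : ∀ t ∈ Set.Icc (0 : ℝ) T, ∀ x : X, HasDerivAt (fun s => h s x)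
      (∑ y ∈ Finset.univ.filter (fun y => y ≠ x), Q t x y * (h t x - h t y)) t)
    (hfwd : ∀ t ∈ Set.Icc (0 : ℝ) T, ∀ x : X, HasDerivAt (fun s => p s x)
      ((∑ y ∈ Finset.univ.filter (fun y => y ≠ x), Q t y x * p t y) -
        ∑ y ∈ Finset.univ.filter (fun y => y ≠ x), Q t x y * p t x) t)
    (C : ℝ) (hC : C ≠ 0)
    (Qstar : ℝ → X → X → ℝ)
    (hQstar : ∀ t : ℝ, ∀ x y : X, x ≠ y → Qstar t x y = Q t x y * h t y / h t x)
    (H : ℝ → X → ℝ)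
    (hH : ∀ t : ℝ, ∀ x : X, H t x = h t x * p t x / C)
    (pstar : ℝ → X → ℝ)
    (hpstarfwd : ∀ t ∈ Set.Icc (0 : ℝ) T, ∀ x : X, HasDerivAt (fun s => pstar s x)
      ((∑ y ∈ Finset.univ.filter (fun y => y ≠ x), Qstar t y x * pstar t y) -
        ∑ y ∈ Finset.univ.filter (fun y => y ≠ x), Qstar t x y * pstar t x) t)
    (hpstar0 : ∀ x : X, pstar 0 x = H 0 x) :
    (∀ t ∈ Set.Icc (0 : ℝ) T, ∀ x : X, pstar t x = H t x) ∧
    (∀ α : ℝ, 0 < α → ∀ r : X → ℝ, (∀ x : X, h T x = Real.exp (r x / α)) →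
      ∀ x : X, pstar T x = Real.exp (r x / α) * p T x / C) := by
  have hne : ∀ t ∈ Set.Icc (0 : ℝ) T, ∀ x : X, h t x ≠ 0 := fun t ht x => (hpos t ht x).ne'
  have hhc : ∀ x : X, ContinuousOn (fun t => h t x) (Set.Icc 0 T) :=
    fun x t ht => ((hback t ht x).continuousAt).continuousWithinAt
  -- H satisfies the forward equation for Qstar
  have hHderiv : ∀ t ∈ Set.Icc (0 : ℝ) T, ∀ x : X, HasDerivAt (fun s => H s x)
      ((∑ y ∈ Finset.univ.filter (fun y => y ≠ x), Qstar t y x * H t y) -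
        ∑ y ∈ Finset.univ.filter (fun y => y ≠ x), Qstar t x y * H t x) t := by
    intro t ht x
    have h2 := ((hback t ht x).mul (hfwd t ht x)).div_const C
    have hfun : (fun s => H s x) = fun s => h s x * p s x / C := funext fun s => hH s x
    rw [hfun]
    refine HasDerivAt.congr_deriv h2 (Eq.symm ?_)
    have e1 : ∀ y ∈ Finset.univ.filter (fun y => y ≠ x),
        Qstar t y x * H t y = Q t y x * h t x / h t y * (h t y * p t y / C) := fun y hy => by
      rw [hQstar t y x (Finset.mem_filter.mp hy).2, hH t y]
    have e2 : ∀ y ∈ Finset.univ.filter (fun y => y ≠ x),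
        Qstar t x y * H t x = Q t x y * h t y / h t x * (h t x * p t x / C) := fun y hy => by
      rw [hQstar t x y (Ne.symm (Finset.mem_filter.mp hy).2), hH t x]
    rw [Finset.sum_congr rfl e1, Finset.sum_congr rfl e2]
    have key : ∀ y ∈ Finset.univ.filter (fun y => y ≠ x),
        Q t y x * h t x / h t y * (h t y * p t y / C) -
          Q t x y * h t y / h t x * (h t x * p t x / C) =
        (Q t x y * (h t x - h t y) * p t x +
          (h t x * (Q t y x * p t y) - h t x * (Q t x y * p t x))) / C := by
      intro y hy
      have hyx := hne t ht y
      have hxx := hne t ht x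
      field_simp
      ring
    calc (∑ y ∈ Finset.univ.filter (fun y => y ≠ x), Q t y x * h t x / h t y * (h t y * p t y / C))
          - ∑ y ∈ Finset.univ.filter (fun y => y ≠ x), Q t x y * h t y / h t x * (h t x * p t x / C)
        = ∑ y ∈ Finset.univ.filter (fun y => y ≠ x),
            (Q t y x * h t x / h t y * (h t y * p t y / C) -
              Q t x y * h t y / h t x * (h t x * p t x / C)) := by
          rw [Finset.sum_sub_distrib]
      _ = ∑ y ∈ Finset.univ.filter (fun y => y ≠ x),
            (Q t x y * (h t x - h t y) * p t x +
              (h t x * (Q t y x * p t y) - h t x * (Q t x y * p t x))) / C :=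
          Finset.sum_congr rfl key
      _ = ((∑ y ∈ Finset.univ.filter (fun y => y ≠ x), Q t x y * (h t x - h t y)) * p t x +
            h t x * ((∑ y ∈ Finset.univ.filter (fun y => y ≠ x), Q t y x * p t y) -
              ∑ y ∈ Finset.univ.filter (fun y => y ≠ x), Q t x y * p t x)) / C := by
          rw [← Finset.sum_div, Finset.sum_add_distrib, Finset.sum_sub_distrib,
            Finset.sum_mul, ← Finset.mul_sum, ← Finset.mul_sum, mul_sub]
  -- the difference f t := pstar t - H t, as a function into the Pi type
  set f : ℝ → X → ℝ := fun t x => pstar t x - H t x with hf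
  set f' : ℝ → X → ℝ := fun t x =>
    (∑ y ∈ Finset.univ.filter (fun y => y ≠ x), Qstar t y x * f t y) -
      ∑ y ∈ Finset.univ.filter (fun y => y ≠ x), Qstar t x y * f t x with hf'
  have hfderiv : ∀ t ∈ Set.Icc (0 : ℝ) T, HasDerivAt f (f' t) t := by
    intro t ht
    rw [hasDerivAt_pi]
    intro x
    have := (hpstarfwd t ht x).sub (hHderiv t ht x)
    refine HasDerivAt.congr_deriv this (Eq.symm ?_)
    simp only [hf', hf, mul_sub, Finset.sum_sub_distrib]
    ring
  -- a uniform bound on the transformed rates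
  obtain ⟨M, hM0, hM⟩ : ∃ M, 0 ≤ M ∧
      ∀ t ∈ Set.Icc (0 : ℝ) T, ∀ x y : X, x ≠ y → |Qstar t x y| ≤ M := by
    set F : ℝ → X → X → ℝ := fun t x y => if x = y then 0 else Qstar t x y with hFdef
    have hcont : ContinuousOn F (Set.Icc 0 T) := by
      rw [continuousOn_pi]
      intro x
      rw [continuousOn_pi]
      intro y
      simp only [hFdef]
      by_cases hxy : x = y
      · simp only [if_pos hxy]
        exact continuousOn_const
      · simp only [if_neg hxy]
        have : ContinuousOn (fun t => Q t x y * h t y / h t x) (Set.Icc 0 T) :=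
          ((hQcont x y).mul (hhc y)).div (hhc x) (fun t ht => hne t ht x)
        exact this.congr (fun t _ => hQstar t x y hxy)
    obtain ⟨M, hM⟩ := isCompact_Icc.exists_bound_of_continuousOn hcont
    have h0 : (0 : ℝ) ∈ Set.Icc (0 : ℝ) T := ⟨le_refl _, hT.le⟩
    refine ⟨M, le_trans (norm_nonneg _) (hM 0 h0), ?_⟩
    intro t ht x y hxy
    have h1 := hM t ht
    calc |Qstar t x y| = ‖F t x y‖ := by rw [hFdef]; simp [if_neg hxy]
      _ ≤ ‖F t x‖ := norm_le_pi_norm (F t x) y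
      _ ≤ ‖F t‖ := norm_le_pi_norm (F t) x
      _ ≤ M := h1
  set n : ℕ := Fintype.card X
  set K : ℝ := 2 * n * M with hK
  have hK0 : 0 ≤ K := by positivity
  -- Grönwall argument: f vanishes on [0, T]
  have hfzero : ∀ t ∈ Set.Icc (0 : ℝ) T, f t = 0 := by
    have hcontf : ContinuousOn f (Set.Icc 0 T) :=
      fun t ht => ((hfderiv t ht).continuousAt).continuousWithinAt
    have hderiv' : ∀ t ∈ Set.Ico (0 : ℝ) T, HasDerivWithinAt f (f' t) (Set.Ici t) t :=
      fun t ht => (hfderiv t ⟨ht.1, ht.2.le⟩).hasDerivWithinAt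
    have hstart : ‖f 0‖ ≤ 0 := by
      have : f 0 = 0 := funext fun x => by simp [hf, hpstar0 x]
      rw [this, norm_zero]
    have hbound : ∀ t ∈ Set.Ico (0 : ℝ) T, ‖f' t‖ ≤ K * ‖f t‖ + 0 := by
      intro t ht
      have ht' : t ∈ Set.Icc (0 : ℝ) T := ⟨ht.1, ht.2.le⟩
      rw [add_zero]
      have hKf : 0 ≤ K * ‖f t‖ := mul_nonneg hK0 (norm_nonneg _)
      rw [pi_norm_le_iff_of_nonneg hKf]
      intro x
      have hterm : ∀ y ∈ Finset.univ.filter (fun y => y ≠ x),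
          |Qstar t y x * f t y| ≤ M * ‖f t‖ := by
        intro y hy
        rw [abs_mul]
        exact mul_le_mul (hM t ht' y x (Finset.mem_filter.mp hy).2)
          (norm_le_pi_norm (f t) y) (abs_nonneg _) hM0
      have hterm2 : ∀ y ∈ Finset.univ.filter (fun y => y ≠ x),
          |Qstar t x y * f t x| ≤ M * ‖f t‖ := by
        intro y hy
        rw [abs_mul]
        exact mul_le_mul (hM t ht' x y (Ne.symm (Finset.mem_filter.mp hy).2))
          (norm_le_pi_norm (f t) x) (abs_nonneg _) hM0
      have hcard : ((Finset.univ.filter (fun y => y ≠ x)).card : ℝ) ≤ n := by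
        exact_mod_cast Finset.card_filter_le _ _
      calc ‖f' t x‖
          = |(∑ y ∈ Finset.univ.filter (fun y => y ≠ x), Qstar t y x * f t y) -
              ∑ y ∈ Finset.univ.filter (fun y => y ≠ x), Qstar t x y * f t x| := rfl
        _ ≤ |∑ y ∈ Finset.univ.filter (fun y => y ≠ x), Qstar t y x * f t y| +
              |∑ y ∈ Finset.univ.filter (fun y => y ≠ x), Qstar t x y * f t x| :=
            abs_sub _ _
        _ ≤ (∑ y ∈ Finset.univ.filter (fun y => y ≠ x), |Qstar t y x * f t y|) +
              ∑ y ∈ Finset.univ.filter (fun y => y ≠ x), |Qstar t x y * f t x| :=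
            add_le_add (Finset.abs_sum_le_sum_abs _ _) (Finset.abs_sum_le_sum_abs _ _)
        _ ≤ (∑ _y ∈ Finset.univ.filter (fun y => y ≠ x), M * ‖f t‖) +
              ∑ _y ∈ Finset.univ.filter (fun y => y ≠ x), M * ‖f t‖ :=
            add_le_add (Finset.sum_le_sum hterm) (Finset.sum_le_sum hterm2)
        _ = ((Finset.univ.filter (fun y => y ≠ x)).card : ℝ) * (M * ‖f t‖) +
              ((Finset.univ.filter (fun y => y ≠ x)).card : ℝ) * (M * ‖f t‖) := by
            rw [Finset.sum_const, nsmul_eq_mul]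
        _ ≤ (n : ℝ) * (M * ‖f t‖) + (n : ℝ) * (M * ‖f t‖) :=
            add_le_add (mul_le_mul_of_nonneg_right hcard (mul_nonneg hM0 (norm_nonneg _)))
              (mul_le_mul_of_nonneg_right hcard (mul_nonneg hM0 (norm_nonneg _)))
        _ = K * ‖f t‖ := by rw [hK]; ring
    intro t ht
    have := norm_le_gronwallBound_of_norm_deriv_right_le hcontf hderiv' hstart hbound t ht
    rw [gronwallBound_ε0_δ0] at this
    exact norm_le_zero_iff.mp this
  have main : ∀ t ∈ Set.Icc (0 : ℝ) T, ∀ x : X, pstar t x = H t x := by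
    intro t ht x
    have := congrFun (hfzero t ht) x
    simpa [hf, sub_eq_zero] using this
  refine ⟨main, ?_⟩
  intro α hα r hr x
  have hTm : T ∈ Set.Icc (0 : ℝ) T := ⟨hT.le, le_refl _⟩
  rw [main T hTm x, hH, hr x]
end

section
/- Let X be a finite type with a distinguished element M (the Mask symbol), γ > 0, and sθ, spre : X → ℝ with sθ x > 0 and spre x > 0 for all x ≠ M. Let c : X → ℝ be nonnegative, and define Qθ, Qpre : X → X → ℝ by: Qθ M y = Qpre M y = c y for all y; for x ≠ M, Qθ x y = γ·sθ x if y = M and Qθ x y = 0 otherwise, and Qpre x y = γ·spre x if y = M and Qpre x y = 0 otherwise. Then for every weight function w : X → ℝ, ∑_{x ∈ X} w x · ∑_{y ≠ x} (−Qθ x y + Qpre x y + Qθ x y · log(Qθ x y / Qpre x y)) = γ · ∑_{x ≠ M} w x · (−sθ x + spre x + sθ x · log(sθ x / spre x)), where any summand of the form 0·log(0/0) or r·log(r/r) is interpreted as 0. (Simplified formula of the KL divergence estimator g(θ) for masked diffusion models, Appendix C.2.) -/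
open Real Finset

/-- Simplified formula of the KL divergence estimator `g(θ)` for masked diffusion models
(Appendix C.2): for the reverse-process generators of masked diffusion models, which
only have nonzero off-diagonal rates `γ·sθ x` (resp. `γ·spre x`) from non-Mask states
`x` into the Mask state `M` (and common rates `c` out of `M`), the weighted KL summand
reduces to `γ · ∑_{x ≠ M} w x · (−sθ x + spre x + sθ x · log (sθ x / spre x))`.
(Summands of the form `0·log(0/0)` or `r·log(r/r)` vanish, automatically since
`Real.log 0 = 0` and `log (r/r) = 0`.) -/
theorem drakes_masked_kl_simplification
    {X : Type*} [Fintype X] [DecidableEq X] (M : X) (γ : ℝ) (hγ : 0 < γ)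
    (sθ spre : X → ℝ)
    (hsθ : ∀ x : X, x ≠ M → 0 < sθ x) (hspre : ∀ x : X, x ≠ M → 0 < spre x)
    (c : X → ℝ) (hc : ∀ y, 0 ≤ c y)
    (Qθ Qpre : X → X → ℝ)
    (hQθM : ∀ y : X, Qθ M y = c y) (hQpreM : ∀ y : X, Qpre M y = c y)
    (hQθ : ∀ x : X, x ≠ M → ∀ y : X, Qθ x y = if y = M then γ * sθ x else 0)
    (hQpre : ∀ x : X, x ≠ M → ∀ y : X, Qpre x y = if y = M then γ * spre x else 0)
    (w : X → ℝ) :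
    ∑ x : X, w x * ∑ y ∈ Finset.univ.filter (fun y => y ≠ x),
        (-Qθ x y + Qpre x y + Qθ x y * Real.log (Qθ x y / Qpre x y)) =
      γ * ∑ x ∈ Finset.univ.filter (fun x => x ≠ M),
        w x * (-sθ x + spre x + sθ x * Real.log (sθ x / spre x)) := by
  have key : ∀ x : X, w x * ∑ y ∈ Finset.univ.filter (fun y => y ≠ x),
      (-Qθ x y + Qpre x y + Qθ x y * Real.log (Qθ x y / Qpre x y)) =
      if x = M then 0 else
        γ * (w x * (-sθ x + spre x + sθ x * Real.log (sθ x / spre x))) := by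
    intro x
    by_cases hx : x = M
    · rw [if_pos hx, hx]
      have : ∀ y ∈ Finset.univ.filter (fun y => y ≠ M),
          (-Qθ M y + Qpre M y + Qθ M y * Real.log (Qθ M y / Qpre M y)) = 0 := by
        intro y _
        rw [hQθM, hQpreM]
        rcases eq_or_ne (c y) 0 with h | h
        · simp [h]
        · rw [div_self h, Real.log_one]; ring
      rw [Finset.sum_eq_zero this, mul_zero]
    · rw [if_neg hx]
      have hM : M ∈ Finset.univ.filter (fun y => y ≠ x) := by
        simp [Ne.symm hx]
      rw [Finset.sum_eq_single_of_mem M hM]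
      · rw [hQθ x hx M, hQpre x hx M]
        simp only [eq_self_iff_true, if_true]
        have h1 : γ * sθ x / (γ * spre x) = sθ x / spre x := by
          rw [mul_div_mul_left _ _ hγ.ne']
        rw [h1]; ring
      · intro y hy hyM
        rw [hQθ x hx y, hQpre x hx y, if_neg hyM, if_neg hyM]
        simp
  rw [Finset.sum_congr rfl (fun x _ => key x), Finset.mul_sum, Finset.sum_filter]
  exact Finset.sum_congr rfl fun x _ => by by_cases h : x = M <;> simp [h]
end

section
/- Let X be a finite nonempty type, T ∈ ℝ, and Q : ℝ → X → X → ℝ a time-dependent rate family. Suppose j : ℝ → X → ℝ satisfies the Kolmogorov forward equation for Q on [0, T] and j t x > 0 for all t ∈ [0, T] and x ∈ X. Define the time-reversal rate family Q̄ : ℝ → X → X → ℝ by Q̄ t x y = (j t y / j t x) · Q t y x for x ≠ y. Then the reversed marginals j̄ t x := j (T − t) x satisfy, for every t ∈ [0, T] and x ∈ X: the function s ↦ j̄ s x is differentiable at t with derivative (∑_{y ≠ x} Q̄ (T − t) y x · j̄ t y) − (∑_{y ≠ x} Q̄ (T − t) x y · j̄ t x). (Time-reversal formula for continuous-time Markov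 chains, equation (2).) -/
open Real Finset Set

/-- Time-reversal formula for continuous-time Markov chains (equation (2)): if `j`
satisfies the Kolmogorov forward equation for `Q` on `[0, T]` and is positive there,
then the reversed marginals `t ↦ j (T − t) x` satisfy the Kolmogorov forward equation
for the time-reversal rate family `Q̄ t x y = (j t y / j t x) · Q t y x` (for `x ≠ y`),
evaluated at time `T − t`. -/
theorem drakes_ctmc_time_reversal
    {X : Type*} [Fintype X] [Nonempty X] [DecidableEq X]
    (T : ℝ) (Q : ℝ → X → X → ℝ) (j : ℝ → X → ℝ)
    (hfwd : ∀ t ∈ Set.Icc (0 : ℝ) T, ∀ x : X, HasDerivAt (fun s => j s x)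
      ((∑ y ∈ Finset.univ.filter (fun y => y ≠ x), Q t y x * j t y) -
        ∑ y ∈ Finset.univ.filter (fun y => y ≠ x), Q t x y * j t x) t)
    (hpos : ∀ t ∈ Set.Icc (0 : ℝ) T, ∀ x : X, 0 < j t x)
    (Qbar : ℝ → X → X → ℝ)
    (hQbar : ∀ t : ℝ, ∀ x y : X, x ≠ y → Qbar t x y = (j t y / j t x) * Q t y x) :
    ∀ t ∈ Set.Icc (0 : ℝ) T, ∀ x : X, HasDerivAt (fun s => j (T - s) x)
      ((∑ y ∈ Finset.univ.filter (fun y => y ≠ x), Qbar (T - t) y x * j (T - t) y) -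
        ∑ y ∈ Finset.univ.filter (fun y => y ≠ x), Qbar (T - t) x y * j (T - t) x) t := by
  intro t ht x
  obtain ⟨ht0, ht1⟩ := ht
  have ht' : T - t ∈ Set.Icc (0:ℝ) T := ⟨by linarith, by linarith⟩
  set s := T - t with hs
  have hD := hfwd s ht' x
  have hneg : HasDerivAt (fun u : ℝ => T - u) (-1) t := (hasDerivAt_id t).const_sub T
  have hcomp := hD.comp t hneg
  refine hcomp.congr_deriv ?_
  have e1 : ∀ y ∈ Finset.univ.filter (fun y => y ≠ x),
      Qbar s y x * j s y = Q s x y * j s x := by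
    intro y hy
    have hyx : y ≠ x := (Finset.mem_filter.mp hy).2
    rw [hQbar s y x hyx]
    have h := (hpos s ht' y).ne'
    field_simp
  have e2 : ∀ y ∈ Finset.univ.filter (fun y => y ≠ x),
      Qbar s x y * j s x = Q s y x * j s y := by
    intro y hy
    have hyx : y ≠ x := (Finset.mem_filter.mp hy).2
    rw [hQbar s x y hyx.symm]
    have h := (hpos s ht' x).ne'
    field_simp
  rw [Finset.sum_congr rfl e1, Finset.sum_congr rfl e2]
  ring
end

section
/- Let μ be the standard Gumbel probability measure on ℝ, i.e., the Borel probability measure with cumulative distribution function x ↦ exp(−exp(−x)) (equivalently, with density x ↦ exp(−x − exp(−x)) with respect to Lebesgue measure). Let Y be a finite nonempty type, π : Y → ℝ with π y > 0 for all y, and let k ∈ Y. Then, under the product measure ⨂_{y ∈ Y} μ on functions g : Y → ℝ, the probability of the event {g | for all y ≠ k, log(π k) + g k > log(π y) + g y} equals π k / ∑_{y ∈ Y} π y. (The Gumbel-max trick: sampling from a categorical distribution reduces to an argmax over Gumbel-perturbed log-weights, underpinning Stage 1 of DRAKES.) -/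
open Real Finset MeasureTheory Set Filter

lemma gumbel_hasDerivAt {s : ℝ} (hs : 0 < s) (x : ℝ) :
    HasDerivAt (fun x => (1/s) * exp (-(s * exp (-x)))) (exp (-x - s * exp (-x))) x := by
  have h1 : HasDerivAt (fun x : ℝ => -(s * exp (-x))) (s * exp (-x)) x := by
    have := ((Real.hasDerivAt_exp (-x)).comp x (hasDerivAt_neg x)).const_mul s
    exact this.neg.congr_deriv (by ring)
  have h3 := ((Real.hasDerivAt_exp _).comp x h1).const_mul (1/s)
  refine h3.congr_deriv ?_; symm
  rw [sub_eq_add_neg, Real.exp_add]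
  field_simp

lemma integrable_exp_neg_abs' : Integrable (fun x : ℝ => exp (-|x|)) := by
  rw [← integrableOn_univ, ← Set.Iic_union_Ioi (a := (0:ℝ)), integrableOn_union]
  constructor
  · apply (integrableOn_exp_Iic 0).congr_fun _ measurableSet_Iic
    intro x hx; simp only [Set.mem_Iic] at hx
    show rexp x = rexp (-|x|)
    rw [abs_of_nonpos hx, neg_neg]
  · apply (exp_neg_integrableOn_Ioi 0 one_pos).congr_fun _ measurableSet_Ioi
    intro x hx; simp only [Set.mem_Ioi] at hx
    show rexp (-1 * x) = rexp (-|x|)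
    rw [abs_of_pos hx]; ring_nf

lemma gumbel_integrable {s : ℝ} (hs : 0 < s) :
    Integrable (fun x => exp (-x - s * exp (-x))) := by
  have key : ∀ x : ℝ, ‖exp (-x - s * exp (-x))‖ ≤ max 1 (2/s^2) * exp (-|x|) := by
    intro x
    rw [Real.norm_eq_abs, abs_exp, sub_eq_add_neg, Real.exp_add]
    rcases le_or_gt 0 x with hx | hx
    · rw [abs_of_nonneg hx]
      calc exp (-x) * exp (-(s * exp (-x))) ≤ exp (-x) * 1 := by
            apply mul_le_mul_of_nonneg_left _ (exp_nonneg _)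
            rw [exp_le_one_iff]
            have : 0 < s * exp (-x) := by positivity
            linarith
        _ ≤ max 1 (2/s^2) * exp (-x) := by
            rw [mul_one]; nlinarith [exp_pos (-x), le_max_left 1 (2/s^2)]
    · rw [abs_of_neg hx, neg_neg]
      set u := exp (-x) with hu
      have hu1 : 1 ≤ u := by rw [hu, Real.one_le_exp_iff]; linarith
      have hup : 0 < u := lt_of_lt_of_le one_pos hu1
      have hq : (s*u)^2/2 ≤ exp (s*u) := by
        have := Real.quadratic_le_exp_of_nonneg (x := s*u) (by positivity)
        nlinarith [mul_pos hs hup]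
      have hexp : exp (-(s * u)) ≤ 2/(s*u)^2 := by
        rw [Real.exp_neg, inv_le_comm₀ (exp_pos _) (by positivity)]
        calc (2/(s*u)^2)⁻¹ = (s*u)^2/2 := by
              field_simp
          _ ≤ exp (s*u) := hq
      have hxe : 1/u ≤ exp x := le_of_eq (by rw [hu, one_div, ← Real.exp_neg, neg_neg])
      calc u * exp (-(s*u)) ≤ u * (2/(s*u)^2) := by nlinarith
        _ = (2/s^2) * (1/u) := by field_simp
        _ ≤ max 1 (2/s^2) * exp x := by
            apply mul_le_mul (le_max_right _ _) hxe (by positivity)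
            positivity
  exact (integrable_exp_neg_abs'.const_mul _).mono'
    (Continuous.aestronglyMeasurable (by continuity)) (ae_of_all _ key)

lemma gumbel_tendsto_atBot {s : ℝ} (hs : 0 < s) :
    Tendsto (fun x => (1/s) * exp (-(s * exp (-x)))) atBot (nhds 0) := by
  have h1 : Tendsto (fun x : ℝ => -(s * exp (-x))) atBot atBot := by
    apply tendsto_neg_atTop_atBot.comp
    exact (Real.tendsto_exp_atTop.comp tendsto_neg_atBot_atTop).const_mul_atTop hs
  have := Real.tendsto_exp_atBot.comp h1
  simpa using this.const_mul (1/s)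

lemma gumbel_tendsto_atTop {s : ℝ} (hs : 0 < s) :
    Tendsto (fun x => (1/s) * exp (-(s * exp (-x)))) atTop (nhds (1/s)) := by
  have h1 : Tendsto (fun x : ℝ => -(s * exp (-x))) atTop (nhds 0) := by
    have := (Real.tendsto_exp_atBot.comp tendsto_neg_atTop_atBot).const_mul s
    simpa using this.neg
  have := (Real.continuous_exp.tendsto 0).comp h1
  simpa using this.const_mul (1/s)

lemma gumbel_integral {s : ℝ} (hs : 0 < s) :
    ∫ x, exp (-x - s * exp (-x)) = 1/s := by
  have := integral_of_hasDerivAt_of_tendsto (gumbel_hasDerivAt hs) (gumbel_integrable hs)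
    (gumbel_tendsto_atBot hs) (gumbel_tendsto_atTop hs)
  simpa using this

lemma gumbel_integral_Iic {s : ℝ} (hs : 0 < s) (t : ℝ) :
    ∫ x in Iic t, exp (-x - s * exp (-x)) = (1/s) * exp (-(s * exp (-t))) := by
  have := integral_Iic_of_hasDerivAt_of_tendsto' (a := t)
    (fun x (_ : x ∈ Iic t) => gumbel_hasDerivAt hs x)
    (gumbel_integrable hs).integrableOn (gumbel_tendsto_atBot hs)
  simpa using this

noncomputable def gumbelDensity : ℝ → ENNReal := fun x => ENNReal.ofReal (exp (-x - exp (-x)))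

lemma gumbel_measure_eq (μ : Measure ℝ) [IsProbabilityMeasure μ]
    (hμ : ∀ x : ℝ, μ (Set.Iic x) = ENNReal.ofReal (exp (-exp (-x)))) :
    μ = volume.withDensity gumbelDensity := by
  apply MeasureTheory.Measure.ext_of_Iic
  intro a
  rw [hμ, withDensity_apply _ measurableSet_Iic]
  have h1 : ∀ x : ℝ, gumbelDensity x = ENNReal.ofReal (exp (-x - 1 * exp (-x))) := by
    intro x; rw [gumbelDensity, one_mul]
  simp only [h1]
  rw [← ofReal_integral_eq_lintegral_ofReal
      ((gumbel_integrable one_pos).integrableOn)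
      (ae_of_all _ fun x => exp_nonneg _),
    gumbel_integral_Iic one_pos a]
  norm_num

lemma gumbel_measure_Iio (μ : Measure ℝ) [IsProbabilityMeasure μ]
    (hμ : ∀ x : ℝ, μ (Set.Iic x) = ENNReal.ofReal (exp (-exp (-x)))) (t : ℝ) :
    μ (Set.Iio t) = ENNReal.ofReal (exp (-exp (-t))) := by
  rw [gumbel_measure_eq μ hμ, withDensity_apply _ measurableSet_Iio,
    setLIntegral_congr Iio_ae_eq_Iic, ← withDensity_apply _ measurableSet_Iic,
    ← gumbel_measure_eq μ hμ, hμ]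

/-- The Gumbel-max trick (Stage 1 of DRAKES): if `μ` is the standard Gumbel probability
measure on `ℝ` (CDF `x ↦ exp (−exp (−x))`), `w : Y → ℝ` is a positive weight vector
(`w` plays the role of `π` in the paper) on a finite nonempty type `Y`, and `g : Y → ℝ`
is drawn from the product measure `⨂_y μ`, then the probability that
`log (w k) + g k` strictly exceeds `log (w y) + g y` for all `y ≠ k` equals
`w k / ∑ y, w y`. -/
theorem drakes_gumbel_max_trick
    {Y : Type*} [Fintype Y] [Nonempty Y] [DecidableEq Y]
    (μ : Measure ℝ) [IsProbabilityMeasure μ]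
    (hμ : ∀ x : ℝ, μ (Set.Iic x) = ENNReal.ofReal (Real.exp (-Real.exp (-x))))
    (w : Y → ℝ) (hw : ∀ y, 0 < w y) (k : Y) :
    Measure.pi (fun _ : Y => μ)
        {g : Y → ℝ | ∀ y : Y, y ≠ k → Real.log (w y) + g y < Real.log (w k) + g k}
      = ENNReal.ofReal (w k / ∑ y : Y, w y) := by
  classical
  set c : Y → ℝ := fun y => Real.log (w k) - Real.log (w y) with hc
  set p : Y → Prop := fun y => y = k with hp
  haveI : DecidablePred p := fun y => inferInstanceAs (Decidable (y = k))
  haveI hu : Unique {y // p y} :=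
    ⟨⟨⟨k, rfl⟩⟩, by rintro ⟨y, hy⟩; simp only [hp] at hy; subst hy; rfl⟩
  have hwsum : 0 < ∑ y : Y, w y := Finset.sum_pos (fun y _ => hw y) univ_nonempty
  set r : ℝ := (∑ y : Y, w y) / w k - 1 with hr
  have hr0 : 0 ≤ r := by
    rw [hr, sub_nonneg, le_div_iff₀ (hw k), one_mul]
    exact Finset.single_le_sum (fun y _ => (hw y).le) (mem_univ k)
  have hrs : r + 1 = (∑ y : Y, w y) / w k := by rw [hr]; ring
  set S : Set (({y // p y} → ℝ) × ({y // ¬ p y} → ℝ)) :=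
    {q | ∀ y : {y // ¬ p y}, q.2 y < q.1 default + c y} with hS
  have hSm : MeasurableSet S := by
    rw [hS, Set.setOf_forall]
    exact MeasurableSet.iInter fun y => measurableSet_lt
      (measurable_snd.eval) ((measurable_fst.eval).add_const _)
  have hdef : ((default : {y // p y}) : Y) = k := (default : {y // p y}).2
  have hE : {g : Y → ℝ | ∀ y : Y, y ≠ k → Real.log (w y) + g y < Real.log (w k) + g k}
      = (MeasurableEquiv.piEquivPiSubtypeProd (fun _ : Y => ℝ) p) ⁻¹' S := by
    ext g
    simp only [Set.mem_setOf_eq, Set.mem_preimage, hS, MeasurableEquiv.piEquivPiSubtypeProd,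
      MeasurableEquiv.coe_mk, Equiv.piEquivPiSubtypeProd_apply, hdef, hc]
    constructor
    · intro h y
      have := h y y.2
      linarith
    · intro h y hy
      have := h ⟨y, hy⟩
      simp only at this
      linarith
  rw [hE, (measurePreserving_piEquivPiSubtypeProd (fun _ : Y => μ) p).measure_preimage
      hSm.nullMeasurableSet, Measure.prod_apply hSm]
  have hslice : ∀ a : {y // p y} → ℝ,
      (Prod.mk a ⁻¹' S) = Set.pi Set.univ (fun y : {y // ¬ p y} => Iio (a default + c y)) := by
    intro a; ext b; simp [hS, Set.mem_pi]
  have hpt : ∀ x : ℝ, (∏ y : {y // ¬ p y}, μ (Iio (x + c y)))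
      = ENNReal.ofReal (exp (-(r * exp (-x)))) := by
    intro x
    have h1 : ∀ y : {y // ¬ p y}, μ (Iio (x + c y)) = ENNReal.ofReal (exp (-exp (-(x + c y)))) :=
      fun y => gumbel_measure_Iio μ hμ _
    simp only [h1]
    rw [← ENNReal.ofReal_prod_of_nonneg (fun y _ => exp_nonneg _), ← Real.exp_sum]
    congr 1
    have hterm : ∀ y : {y // ¬ p y}, -exp (-(x + c (y : Y))) = -(exp (-x) * (w y / w k)) := by
      intro y
      rw [neg_add, Real.exp_add, hc]
      congr 2
      rw [neg_sub, Real.exp_sub, Real.exp_log (hw _), Real.exp_log (hw _)]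
    rw [Finset.sum_congr rfl (fun y _ => hterm y), Finset.sum_neg_distrib, ← Finset.mul_sum,
      ← Finset.sum_div]
    have hsub : (∑ y : {y // ¬ p y}, w (y : Y)) = ∑ y ∈ univ.erase k, w y := by
      rw [← Finset.filter_ne']
      exact (Finset.sum_subtype _ (by intro y; simp [hp]) w).symm
    rw [hsub]
    have : ∑ y ∈ univ.erase k, w y = (∑ y : Y, w y) - w k := by
      have := Finset.sum_erase_add univ w (mem_univ k)
      linarith
    rw [this, hr]
    have hk := (hw k).ne'
    field_simp
  have hm : Measurable fun x : ℝ => ENNReal.ofReal (exp (-(r * exp (-x)))) :=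
    Measurable.ennreal_ofReal (Continuous.measurable (by continuity))
  have key : ∫⁻ x, ENNReal.ofReal (exp (-(r * exp (-x)))) ∂μ
      = ENNReal.ofReal (w k / ∑ y : Y, w y) := by
    have hdm : Measurable gumbelDensity :=
      Measurable.ennreal_ofReal (Continuous.measurable (by continuity))
    have hrpos : (0:ℝ) < r + 1 := by linarith
    rw [gumbel_measure_eq μ hμ, lintegral_withDensity_eq_lintegral_mul _ hdm hm]
    have hpt2 : ∀ x : ℝ, (gumbelDensity * fun x => ENNReal.ofReal (exp (-(r * exp (-x))))) x
        = ENNReal.ofReal (exp (-x - (r+1) * exp (-x))) := by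
      intro x
      show gumbelDensity x * ENNReal.ofReal (exp (-(r * exp (-x)))) = _
      rw [gumbelDensity, ← ENNReal.ofReal_mul (exp_nonneg _), ← Real.exp_add]
      congr 2
      ring
    rw [lintegral_congr hpt2, ← ofReal_integral_eq_lintegral_ofReal (gumbel_integrable hrpos)
      (ae_of_all _ fun x => exp_nonneg _), gumbel_integral hrpos]
    congr 1
    rw [hrs, one_div_div]
  have hfun : ∀ a : {y // p y} → ℝ, (Measure.pi fun _ : {y // ¬ p y} => μ) (Prod.mk a ⁻¹' S)
      = ENNReal.ofReal (exp (-(r * exp (-(a default))))) := by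
    intro a; rw [hslice a, Measure.pi_pi]; exact hpt _
  rw [lintegral_congr hfun]
  have hinst : (Subtype.fintype p : Fintype {y // p y}) = Unique.fintype :=
    Subsingleton.elim _ _
  rw [hinst]
  exact ((measurePreserving_funUnique μ {y // p y}).lintegral_comp hm).trans key
end
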